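/- Fix integers 1 ≤ j < k, let c = C(k,j)-1, p₀ = 1/(c·C(n,k-j)), and p = (1-ε)p₀ where ε = ε(n) > 0, ε → 0, and ε³nʲ → ∞. Then with high probability as n → ∞, every j-component of the random k-uniform hypergraph H^k(n,p) contains at most 3ck·ε⁻²·log n j-sets. -/

import Mathlib

open Filter MeasureTheory
open scoped ENNReal

/-- Two `j`-sets are `j`-connected via a chain of edges with consecutive intersections
of size at least `j`. -/
def jConn {V : Type*} [DecidableEq V] (E : Finset (Finset V)) (j : ℕ)
    (J₁ J₂ : Finset V) : Prop :=
  ∃ l : List (Finset V), ∃ h : l ≠ [],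
    (∀ e ∈ l, e ∈ E) ∧ l.Chain' (fun a b => j ≤ (a ∩ b).card) ∧
    J₁ ⊆ l.head h ∧ J₂ ⊆ l.getLast h

/-- The edge set of the `k`-uniform hypergraph on `[n]` encoded by the indicator
function `ω` on `k`-sets. -/
def edgesOf {n : ℕ} (ω : Finset (Fin n) → Bool) (k : ℕ) : Finset (Finset (Fin n)) :=
  Finset.univ.filter (fun S => S.card = k ∧ ω S = true)

/-- The Bernoulli `PMF` with parameter `p : ℝ≥0∞` (the older Mathlib's `PMF.bernoulli`). -/
noncomputable def bernoulliPMF (p : ℝ≥0∞) (h : p ≤ 1) : PMF Bool :=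
  PMF.ofFintype (fun b => cond b p (1 - p)) (by simp [h])

/-- The distribution of `H^k(n,p)`: every potential edge is present independently with
probability `p`, as a product of Bernoulli measures over all subsets of `[n]`
(only those of size `k` are read off by `edgesOf`). -/
noncomputable def hyperMeasure (n : ℕ) (p : ℝ≥0∞) (hp : p ≤ 1) :
    Measure (Finset (Fin n) → Bool) :=
  Measure.pi (fun _ => (bernoulliPMF p hp).toMeasure)

namespace Stmt10

structure St (n : ℕ) where
  s : ℕ
  t : ℕ
  pop : Finset (Finset (Fin n))
  R : Finset (Finset (Fin n))
  q : List (Finset (Fin n))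

variable {n : ℕ}

noncomputable def explore (j k : ℕ) (ω : Finset (Fin n) → Bool) :
    ℕ → List (Finset (Fin n)) → Finset (Finset (Fin n)) → St n
  | 0, q, R => ⟨0, 0, ∅, R, q⟩
  | b+1, q, R =>
      match q with
      | [] => ⟨0, 0, ∅, R, []⟩
      | J :: q =>
        let Q := R.filter (fun e => J ⊆ e ∧ e.card = k)
        let P := Q.filter (fun e => ω e = true)
        let st := explore j k ω b
          (q ++ ((P.biUnion (fun e => e.powersetCard j)).erase J).toList) (R \ Q)
        ⟨P.card + st.s, st.t + 1, insert J st.pop, st.R, st.q⟩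

variable (j k : ℕ) (ω : Finset (Fin n) → Bool)

lemma explore_zero (q : List (Finset (Fin n))) (R : Finset (Finset (Fin n))) :
    explore j k ω 0 q R = ⟨0, 0, ∅, R, q⟩ := rfl

lemma explore_nil (b : ℕ) (R : Finset (Finset (Fin n))) :
    explore j k ω (b+1) [] R = ⟨0, 0, ∅, R, []⟩ := rfl

lemma explore_cons (b : ℕ) (J : Finset (Fin n)) (q : List (Finset (Fin n)))
    (R : Finset (Finset (Fin n))) :
    explore j k ω (b+1) (J :: q) R =
      let Q := R.filter (fun e => J ⊆ e ∧ e.card = k)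
      let P := Q.filter (fun e => ω e = true)
      let st := explore j k ω b
        (q ++ ((P.biUnion (fun e => e.powersetCard j)).erase J).toList) (R \ Q)
      ⟨P.card + st.s, st.t + 1, insert J st.pop, st.R, st.q⟩ := rfl

lemma card_of_mem_new {J : Finset (Fin n)} {P : Finset (Finset (Fin n))}
    (hP : ∀ e ∈ P, e.card = k) {K : Finset (Fin n)}
    (hK : K ∈ ((P.biUnion (fun e => e.powersetCard j)).erase J).toList) : K.card = j := by
  rcases Finset.mem_biUnion.1 (Finset.mem_of_mem_erase (Finset.mem_toList.1 hK)) with ⟨e, _, hKe⟩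
  exact (Finset.mem_powersetCard.1 hKe).2

lemma card_Q_le (J : Finset (Fin n)) (hJ : J.card = j) (R : Finset (Finset (Fin n))) :
    (R.filter fun e => J ⊆ e ∧ e.card = k).card ≤ n.choose (k - j) := by
  have h : ∀ e ∈ R.filter (fun e => J ⊆ e ∧ e.card = k),
      e \ J ∈ (Finset.univ : Finset (Fin n)).powersetCard (k - j) := by
    intro e he
    simp only [Finset.mem_filter] at he
    exact Finset.mem_powersetCard.2 ⟨Finset.subset_univ _,
      by rw [Finset.card_sdiff_of_subset he.2.1, he.2.2, hJ]⟩
  have h2 : (R.filter fun e => J ⊆ e ∧ e.card = k).card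
      ≤ ((Finset.univ : Finset (Fin n)).powersetCard (k - j)).card := by
    apply Finset.card_le_card_of_injOn (fun e => e \ J) h
    intro a ha b hb hab
    simp only [Finset.mem_coe, Finset.mem_filter] at ha hb
    rw [← Finset.sdiff_union_of_subset ha.2.1, ← Finset.sdiff_union_of_subset hb.2.1]
    simp only at hab
    rw [hab]
  simpa [Finset.card_powersetCard] using h2

lemma new_card_le (J : Finset (Fin n)) (hJ : J.card = j) (P : Finset (Finset (Fin n)))
    (hP : ∀ e ∈ P, J ⊆ e ∧ e.card = k) :
    ((P.biUnion fun e => e.powersetCard j).erase J).card ≤ (k.choose j - 1) * P.card := by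
  have hsub : ((P.biUnion fun e => e.powersetCard j).erase J)
      ⊆ P.biUnion fun e => (e.powersetCard j).erase J := by
    intro K hK
    rcases Finset.mem_erase.1 hK with ⟨hKJ, hK'⟩
    rcases Finset.mem_biUnion.1 hK' with ⟨e, he, hKe⟩
    exact Finset.mem_biUnion.2 ⟨e, he, Finset.mem_erase.2 ⟨hKJ, hKe⟩⟩
  calc ((P.biUnion fun e => e.powersetCard j).erase J).card
      ≤ (P.biUnion fun e => (e.powersetCard j).erase J).card := Finset.card_le_card hsub
    _ ≤ ∑ e ∈ P, ((e.powersetCard j).erase J).card := Finset.card_biUnion_le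
    _ ≤ ∑ _e ∈ P, (k.choose j - 1) := by
        apply Finset.sum_le_sum
        intro e he
        rw [Finset.card_erase_of_mem (Finset.mem_powersetCard.2 ⟨(hP e he).1, hJ⟩),
          Finset.card_powersetCard, (hP e he).2]
    _ = (k.choose j - 1) * P.card := by
        rw [Finset.sum_const, smul_eq_mul, mul_comm]

lemma explore_t_le : ∀ (b : ℕ) (q : List (Finset (Fin n))) (R : Finset (Finset (Fin n))),
    (∀ J ∈ q, J.card = j) →
    (explore j k ω b q R).t ≤ q.length + (k.choose j - 1) * (explore j k ω b q R).s
  | 0, q, R => fun _ => by simp [explore_zero]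
  | b+1, [], R => fun _ => by simp [explore_nil]
  | b+1, J :: q, R => fun hq => by
      rw [explore_cons]
      simp only
      set Q := R.filter (fun e => J ⊆ e ∧ e.card = k) with hQ
      set P := Q.filter (fun e => ω e = true) with hPdef
      set L := ((P.biUnion (fun e => e.powersetCard j)).erase J).toList with hL
      have hP : ∀ e ∈ P, J ⊆ e ∧ e.card = k := by
        intro e he
        exact (Finset.mem_filter.1 (Finset.mem_filter.1 he).1).2
      have hq' : ∀ K ∈ q ++ L, K.card = j := by
        intro K hK
        rcases List.mem_append.1 hK with h | h
        · exact hq K (List.mem_cons_of_mem _ h)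
        · exact card_of_mem_new j k (fun e he => (hP e he).2) h
      have ih := explore_t_le b (q ++ L) (R \ Q) hq'
      have hLlen : L.length ≤ (k.choose j - 1) * P.card := by
        rw [hL, Finset.length_toList]
        exact new_card_le j k J (hq J (List.mem_cons_self)) P hP
      calc (explore j k ω b (q ++ L) (R \ Q)).t + 1
          ≤ (q ++ L).length + (k.choose j - 1) * (explore j k ω b (q ++ L) (R \ Q)).s + 1 :=
            by omega
        _ ≤ (J :: q).length + (k.choose j - 1) * (P.card + (explore j k ω b (q ++ L) (R \ Q)).s) := by
            simp only [List.length_append, List.length_cons, Nat.mul_add]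
            omega

lemma explore_pop_card : ∀ (b : ℕ) (q : List (Finset (Fin n))) (R : Finset (Finset (Fin n))),
    (explore j k ω b q R).pop.card ≤ (explore j k ω b q R).t
  | 0, q, R => by simp [explore_zero]
  | b+1, [], R => by simp [explore_nil]
  | b+1, J :: q, R => by
      rw [explore_cons]
      simp only
      exact le_trans (Finset.card_insert_le _ _)
        (Nat.add_le_add_right (explore_pop_card b _ _) 1)

lemma explore_R_subset : ∀ (b : ℕ) (q : List (Finset (Fin n))) (R : Finset (Finset (Fin n))),
    (explore j k ω b q R).R ⊆ R
  | 0, q, R => by simp [explore_zero]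
  | b+1, [], R => by simp [explore_nil]
  | b+1, J :: q, R => by
      rw [explore_cons]
      exact (explore_R_subset b _ _).trans (Finset.sdiff_subset)

lemma explore_pop_not_R : ∀ (b : ℕ) (q : List (Finset (Fin n))) (R : Finset (Finset (Fin n))),
    ∀ J' ∈ (explore j k ω b q R).pop, ∀ e ∈ (explore j k ω b q R).R,
      ¬(J' ⊆ e ∧ e.card = k)
  | 0, q, R => by simp [explore_zero]
  | b+1, [], R => by simp [explore_nil]
  | b+1, J :: q, R => by
      rw [explore_cons]
      simp only
      intro J' hJ' e he
      set Q := R.filter (fun e => J ⊆ e ∧ e.card = k) with hQ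
      rcases Finset.mem_insert.1 hJ' with rfl | hJ'
      · intro hcon
        have heR : e ∈ R \ Q := explore_R_subset j k ω b _ _ he
        rcases Finset.mem_sdiff.1 heR with ⟨heR', heQ⟩
        exact heQ (Finset.mem_filter.2 ⟨heR', hcon⟩)
      · exact explore_pop_not_R b _ _ J' hJ' e he

lemma explore_complete : ∀ (b : ℕ) (q : List (Finset (Fin n))) (R : Finset (Finset (Fin n))),
    (explore j k ω b q R).q = [] →
      (∀ J ∈ q, J ∈ (explore j k ω b q R).pop) ∧
      (∀ e ∈ R, e ∉ (explore j k ω b q R).R → ω e = true → e.card = k →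
        ∀ K ∈ e.powersetCard j, K ∈ (explore j k ω b q R).pop)
  | 0, q, R => by
      intro hq
      simp only [explore_zero] at hq ⊢
      subst hq
      constructor
      · simp
      · intro e he hne
        exact absurd he hne
  | b+1, [], R => by
      intro _
      simp only [explore_nil]
      constructor
      · simp
      · intro e he hne
        exact absurd he hne
  | b+1, J :: q, R => by
      rw [explore_cons]
      simp only
      intro hfin
      set Q := R.filter (fun e => J ⊆ e ∧ e.card = k) with hQ
      set P := Q.filter (fun e => ω e = true) with hPdef
      set L := ((P.biUnion (fun e => e.powersetCard j)).erase J).toList with hL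
      have ih := explore_complete b (q ++ L) (R \ Q) hfin
      constructor
      · intro J' hJ'
        rcases List.mem_cons.1 hJ' with rfl | hJ'
        · exact Finset.mem_insert_self _ _
        · exact Finset.mem_insert_of_mem (ih.1 J' (List.mem_append_left _ hJ'))
      · intro e heR heF hωe hek K hK
        by_cases heQ : e ∈ Q
        · -- e ∈ Q and present, so its j-subsets were pushed (or equal J)
          have heP : e ∈ P := Finset.mem_filter.2 ⟨heQ, hωe⟩
          by_cases hKJ : K = J
          · subst hKJ; exact Finset.mem_insert_self _ _
          · have : K ∈ L := by
              rw [hL, Finset.mem_toList]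
              exact Finset.mem_erase.2 ⟨hKJ, Finset.mem_biUnion.2 ⟨e, heP, hK⟩⟩
            exact Finset.mem_insert_of_mem (ih.1 K (List.mem_append_right _ this))
        · have heR' : e ∈ R \ Q := Finset.mem_sdiff.2 ⟨heR, heQ⟩
          exact Finset.mem_insert_of_mem (ih.2 e heR' heF hωe hek K hK)

lemma explore_t_of_q_ne : ∀ (b : ℕ) (q : List (Finset (Fin n))) (R : Finset (Finset (Fin n))),
    (explore j k ω b q R).q ≠ [] → (explore j k ω b q R).t = b
  | 0, q, R => by simp [explore_zero]
  | b+1, [], R => by simp [explore_nil]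
  | b+1, J :: q, R => by
      rw [explore_cons]
      simp only
      intro h
      rw [explore_t_of_q_ne b _ _ h]

lemma explore_congr (ω' : Finset (Fin n) → Bool) :
    ∀ (b : ℕ) (q : List (Finset (Fin n))) (R : Finset (Finset (Fin n))),
    (∀ e ∈ R, ω e = ω' e) → explore j k ω b q R = explore j k ω' b q R
  | 0, q, R => fun _ => rfl
  | b+1, [], R => fun _ => rfl
  | b+1, J :: q, R => fun h => by
      rw [explore_cons, explore_cons]
      simp only
      set Q := R.filter (fun e => J ⊆ e ∧ e.card = k) with hQ
      have hPeq : Q.filter (fun e => ω e = true) = Q.filter (fun e => ω' e = true) := by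
        apply Finset.filter_congr
        intro e he
        rw [h e (Finset.mem_filter.1 he).1]
      rw [hPeq]
      rw [explore_congr ω' b _ (R \ Q) (fun e he => h e (Finset.mem_sdiff.1 he).1)]


lemma edge_covered (b : ℕ) (q0 : List (Finset (Fin n))) (R0 : Finset (Finset (Fin n)))
    (hfin : (explore j k ω b q0 R0).q = []) (e : Finset (Fin n))
    (he : e ∈ edgesOf ω k) (heR : e ∈ R0)
    (hwit : ∃ K ∈ e.powersetCard j, K ∈ (explore j k ω b q0 R0).pop) :
    ∀ K' ∈ e.powersetCard j, K' ∈ (explore j k ω b q0 R0).pop := by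
  obtain ⟨K, hKe, hKpop⟩ := hwit
  rcases Finset.mem_filter.1 he with ⟨-, hek, hωe⟩
  rcases Finset.mem_powersetCard.1 hKe with ⟨hKsub, hKcard⟩
  have heRf : e ∉ (explore j k ω b q0 R0).R := by
    intro hcon
    exact explore_pop_not_R j k ω b q0 R0 K hKpop e hcon ⟨hKsub, hek⟩
  exact (explore_complete j k ω b q0 R0 hfin).2 e heR heRf hωe hek

lemma chain_covered (b : ℕ) (q0 : List (Finset (Fin n))) (R0 : Finset (Finset (Fin n)))
    (hfin : (explore j k ω b q0 R0).q = []) (hR0 : R0 = Finset.univ) :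
    ∀ (l : List (Finset (Fin n))) (hl : l ≠ []),
      (∀ e ∈ l, e ∈ edgesOf ω k) → l.Chain' (fun a b => j ≤ (a ∩ b).card) →
      (∃ K ∈ (l.head hl).powersetCard j, K ∈ (explore j k ω b q0 R0).pop) →
      ∀ K' ∈ (l.getLast hl).powersetCard j, K' ∈ (explore j k ω b q0 R0).pop := by
  intro l
  induction l with
  | nil => intro hl; exact absurd rfl hl
  | cons e tl ih =>
    intro hl hel hch hwit
    have he1 : ∀ K' ∈ e.powersetCard j, K' ∈ (explore j k ω b q0 R0).pop := by
      apply edge_covered j k ω b q0 R0 hfin e (hel e (List.mem_cons_self))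
        (hR0 ▸ Finset.mem_univ e)
      simpa using hwit
    match tl, hch with
    | [], _ => simpa using he1
    | e2 :: tl2, hch =>
      have hj : j ≤ (e ∩ e2).card := (List.isChain_cons_cons.1 hch).1
      obtain ⟨K, hKsub, hKcard⟩ := Finset.exists_subset_card_eq hj
      have hKpop : K ∈ (explore j k ω b q0 R0).pop :=
        he1 K (Finset.mem_powersetCard.2
          ⟨hKsub.trans Finset.inter_subset_left, hKcard⟩)
      have hlast : (e :: e2 :: tl2).getLast hl = (e2 :: tl2).getLast (by simp) := by
        rw [List.getLast_cons]
      rw [hlast]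
      apply ih (by simp) (fun e' he' => hel e' (List.mem_cons_of_mem _ he'))
        (List.isChain_cons_cons.1 hch).2
      exact ⟨K, Finset.mem_powersetCard.2 ⟨hKsub.trans Finset.inter_subset_right, hKcard⟩, hKpop⟩

lemma det (m : ℕ) (hm : 1 ≤ m) (S : Finset (Finset (Fin n)))
    (hcards : ∀ J ∈ S, J.card = j)
    (hconn : ∀ J₁ ∈ S, ∀ J₂ ∈ S, jConn (edgesOf ω k) j J₁ J₂)
    (hmS : m ≤ S.card) :
    ∃ J₀ : Finset (Fin n), J₀.card = j ∧
      m ≤ 1 + (k.choose j - 1) * (explore j k ω m [J₀] Finset.univ).s := by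
  have hS : S.Nonempty := Finset.card_pos.1 (lt_of_lt_of_le hm hmS)
  obtain ⟨J₀, hJ₀S⟩ := hS
  refine ⟨J₀, hcards J₀ hJ₀S, ?_⟩
  set X := explore j k ω m [J₀] Finset.univ with hX
  have hq1 : ∀ J ∈ [J₀], J.card = j := by
    intro J hJ; rw [List.mem_singleton.1 hJ]; exact hcards J₀ hJ₀S
  have ht : X.t ≤ 1 + (k.choose j - 1) * X.s := by
    simpa using explore_t_le j k ω m [J₀] Finset.univ hq1
  by_cases hq : X.q = []
  · -- exploration finished: S is covered by popped j-sets
    have hSpop : S ⊆ X.pop := by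
      intro J' hJ'
      obtain ⟨l, hl, hel, hch, hh, hlast⟩ := hconn J₀ hJ₀S J' hJ'
      have hJ₀pop : J₀ ∈ X.pop :=
        (explore_complete j k ω m [J₀] Finset.univ hq).1 J₀ (List.mem_singleton_self _)
      have := chain_covered j k ω m [J₀] Finset.univ hq rfl l hl hel hch
        ⟨J₀, Finset.mem_powersetCard.2 ⟨hh, hcards J₀ hJ₀S⟩, hJ₀pop⟩
      exact this J' (Finset.mem_powersetCard.2 ⟨hlast, hcards J' hJ'⟩)
    calc m ≤ S.card := hmS
      _ ≤ X.pop.card := Finset.card_le_card hSpop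
      _ ≤ X.t := explore_pop_card j k ω m [J₀] Finset.univ
      _ ≤ 1 + (k.choose j - 1) * X.s := ht
  · have : X.t = m := explore_t_of_q_ne j k ω m [J₀] Finset.univ hq
    omega


lemma one_le_y {p' x : ℝ≥0∞} (hp' : p' ≤ 1) (hx : 1 ≤ x) : 1 ≤ (1 - p') + p' * x := by
  calc (1:ℝ≥0∞) = (1 - p') + p' := (tsub_add_cancel_of_le hp').symm
    _ ≤ (1 - p') + p' * x := by
        gcongr
        exact le_mul_of_one_le_right zero_le hx

lemma sum_pow_card {α : Type*} [DecidableEq α] (R : Finset α) (a b : ℝ≥0∞) :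
    ∑ T ∈ R.powerset, a ^ T.card * b ^ (R.card - T.card) = (a + b) ^ R.card := by
  classical
  induction R using Finset.induction_on with
  | empty => simp
  | @insert x R hx ih =>
    rw [Finset.sum_powerset_insert hx]
    have h1 : ∀ T ∈ R.powerset, a ^ T.card * b ^ ((insert x R).card - T.card)
        = b * (a ^ T.card * b ^ (R.card - T.card)) := by
      intro T hT
      have hTR : T.card ≤ R.card := Finset.card_le_card (Finset.mem_powerset.1 hT)
      rw [Finset.card_insert_of_notMem hx,
        show R.card + 1 - T.card = (R.card - T.card) + 1 by omega, pow_succ]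
      ring
    have h2 : ∀ T ∈ R.powerset,
        a ^ (insert x T).card * b ^ ((insert x R).card - (insert x T).card)
        = a * (a ^ T.card * b ^ (R.card - T.card)) := by
      intro T hT
      have hxT : x ∉ T := fun hc => hx (Finset.mem_powerset.1 hT hc)
      have hTR : T.card ≤ R.card := Finset.card_le_card (Finset.mem_powerset.1 hT)
      rw [Finset.card_insert_of_notMem hx, Finset.card_insert_of_notMem hxT,
        show R.card + 1 - (T.card + 1) = R.card - T.card by omega, pow_succ]
      ring
    rw [Finset.sum_congr rfl h1, Finset.sum_congr rfl h2, ← Finset.mul_sum, ← Finset.mul_sum, ih,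
      Finset.card_insert_of_notMem hx, pow_succ]
    ring

lemma sum_powerset_union {α : Type*} [DecidableEq α] {M : Type*} [AddCommMonoid M] :
    ∀ (u : Finset α) {v : Finset α}, Disjoint u v → ∀ (f : Finset α → M),
    ∑ T ∈ (u ∪ v).powerset, f T = ∑ A ∈ u.powerset, ∑ B ∈ v.powerset, f (A ∪ B) := by
  intro u
  induction u using Finset.induction_on with
  | empty => intro v h f; simp
  | @insert a u ha ih =>
    intro v h f
    rcases Finset.disjoint_insert_left.1 h with ⟨hav, hd⟩
    have hauv : a ∉ u ∪ v := by simp [ha, hav]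
    rw [Finset.insert_union, Finset.sum_powerset_insert hauv, ih hd f,
      ih hd (fun T => f (insert a T)), Finset.sum_powerset_insert ha]
    congr 1
    apply Finset.sum_congr rfl
    intro A _
    apply Finset.sum_congr rfl
    intro B _
    rw [Finset.insert_union]

lemma mgf_le (p' x : ℝ≥0∞) (hp' : p' ≤ 1) (hx : 1 ≤ x) :
    ∀ (b : ℕ) (q : List (Finset (Fin n))) (R : Finset (Finset (Fin n))),
    (∀ J ∈ q, J.card = j) →
    ∑ T ∈ R.powerset, p' ^ T.card * (1 - p') ^ (R.card - T.card) *
        x ^ ((explore j k (fun e => decide (e ∈ T)) b q R).s)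
      ≤ ((1 - p') + p' * x) ^ (b * n.choose (k - j))
  | 0, q, R => fun _ => by
      simp only [explore_zero, pow_zero, mul_one, zero_mul]
      rw [sum_pow_card, add_comm p' (1 - p'), tsub_add_cancel_of_le hp', one_pow]
  | b+1, [], R => fun _ => by
      simp only [explore_nil, pow_zero, mul_one]
      rw [sum_pow_card, add_comm p' (1 - p'), tsub_add_cancel_of_le hp', one_pow]
      calc (1:ℝ≥0∞) = 1 ^ ((b+1) * n.choose (k - j)) := (one_pow _).symm
        _ ≤ ((1 - p') + p' * x) ^ ((b+1) * n.choose (k - j)) :=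
            pow_le_pow_left₀ zero_le (one_le_y hp' hx) _
  | b+1, J :: q, R => fun hq => by
      classical
      have hy := one_le_y hp' hx
      set Q := R.filter (fun e => J ⊆ e ∧ e.card = k) with hQdef
      have hQR : Q ⊆ R := Finset.filter_subset _ _
      have hdisj : Disjoint Q (R \ Q) := Finset.disjoint_sdiff
      have hRsplit : Q ∪ (R \ Q) = R := Finset.union_sdiff_of_subset hQR
      have hcardR : R.card = Q.card + (R \ Q).card := by
        have h0 := Finset.card_sdiff_add_card_eq_card hQR
        omega
      -- the per-(A,B) term identity
      have hterm : ∀ A ∈ Q.powerset, ∀ B ∈ (R \ Q).powerset,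
          p' ^ (A ∪ B).card * (1 - p') ^ (R.card - (A ∪ B).card) *
            x ^ ((explore j k (fun e => decide (e ∈ A ∪ B)) (b+1) (J :: q) R).s)
          = ((p' * x) ^ A.card * (1 - p') ^ (Q.card - A.card)) *
            (p' ^ B.card * (1 - p') ^ ((R \ Q).card - B.card) *
              x ^ ((explore j k (fun e => decide (e ∈ B)) b
                (q ++ ((A.biUnion (fun e => e.powersetCard j)).erase J).toList) (R \ Q)).s)) := by
        intro A hA B hB
        have hAQ : A ⊆ Q := Finset.mem_powerset.1 hA
        have hBRQ : B ⊆ R \ Q := Finset.mem_powerset.1 hB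
        have hABdisj : Disjoint A B :=
          Finset.disjoint_of_subset_left hAQ (Finset.disjoint_of_subset_right hBRQ hdisj)
        have hcardAB : (A ∪ B).card = A.card + B.card := Finset.card_union_of_disjoint hABdisj
        have hcA : A.card ≤ Q.card := Finset.card_le_card hAQ
        have hcB : B.card ≤ (R \ Q).card := Finset.card_le_card hBRQ
        -- compute the explore step
        have hP : Q.filter (fun e => (decide (e ∈ A ∪ B)) = true) = A := by
          ext e
          simp only [Finset.mem_filter, decide_eq_true_eq, Finset.mem_union]
          constructor
          · rintro ⟨heQ, he | he⟩
            · exact he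
            · exact absurd heQ (Finset.disjoint_right.1 hdisj (hBRQ he))
          · intro he
            exact ⟨hAQ he, Or.inl he⟩
        have hs : ((explore j k (fun e => decide (e ∈ A ∪ B)) (b+1) (J :: q) R).s)
            = A.card + ((explore j k (fun e => decide (e ∈ B)) b
              (q ++ ((A.biUnion (fun e => e.powersetCard j)).erase J).toList) (R \ Q)).s) := by
          rw [explore_cons]
          simp only [← hQdef, hP]
          congr 1
          have := explore_congr j k (fun e => decide (e ∈ A ∪ B)) (fun e => decide (e ∈ B)) b
            (q ++ ((A.biUnion (fun e => e.powersetCard j)).erase J).toList) (R \ Q) ?_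
          · rw [this]
          · intro e he
            have heB : e ∈ A ∪ B ↔ e ∈ B := by
              constructor
              · rintro h2
                rcases Finset.mem_union.1 h2 with h3 | h3
                · exact absurd (hAQ h3) (Finset.mem_sdiff.1 he).2
                · exact h3
              · intro h3; exact Finset.mem_union_right _ h3
            simp [heB]
        rw [hs, hcardAB, show R.card - (A.card + B.card)
          = (Q.card - A.card) + ((R \ Q).card - B.card) by omega]
        rw [pow_add, pow_add, pow_add, mul_pow]
        ring
      calc ∑ T ∈ R.powerset, p' ^ T.card * (1 - p') ^ (R.card - T.card) *
            x ^ ((explore j k (fun e => decide (e ∈ T)) (b+1) (J :: q) R).s)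
          = ∑ A ∈ Q.powerset, ∑ B ∈ (R \ Q).powerset,
              p' ^ (A ∪ B).card * (1 - p') ^ (R.card - (A ∪ B).card) *
              x ^ ((explore j k (fun e => decide (e ∈ A ∪ B)) (b+1) (J :: q) R).s) := by
            conv_lhs => rw [← hRsplit]
            rw [sum_powerset_union Q hdisj]
            apply Finset.sum_congr rfl
            intro A _
            apply Finset.sum_congr rfl
            intro B _
            rw [hRsplit]
        _ = ∑ A ∈ Q.powerset, ((p' * x) ^ A.card * (1 - p') ^ (Q.card - A.card)) *
              (∑ B ∈ (R \ Q).powerset,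
                p' ^ B.card * (1 - p') ^ ((R \ Q).card - B.card) *
                x ^ ((explore j k (fun e => decide (e ∈ B)) b
                  (q ++ ((A.biUnion (fun e => e.powersetCard j)).erase J).toList) (R \ Q)).s)) := by
            apply Finset.sum_congr rfl
            intro A hA
            rw [Finset.mul_sum]
            exact Finset.sum_congr rfl (fun B hB => hterm A hA B hB)
        _ ≤ ∑ A ∈ Q.powerset, ((p' * x) ^ A.card * (1 - p') ^ (Q.card - A.card)) *
              ((1 - p') + p' * x) ^ (b * n.choose (k - j)) := by
            apply Finset.sum_le_sum
            intro A hA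
            apply mul_le_mul_right
            apply mgf_le p' x hp' hx b _ (R \ Q)
            intro K hK
            rcases List.mem_append.1 hK with h | h
            · exact hq K (List.mem_cons_of_mem _ h)
            · refine card_of_mem_new j k (fun e he => ?_) h
              have heQ : e ∈ Q := Finset.mem_powerset.1 hA he
              exact (Finset.mem_filter.1 heQ).2.2
        _ = (p' * x + (1 - p')) ^ Q.card * ((1 - p') + p' * x) ^ (b * n.choose (k - j)) := by
            rw [← Finset.sum_mul, sum_pow_card]
        _ ≤ ((1 - p') + p' * x) ^ (n.choose (k - j)) *
              ((1 - p') + p' * x) ^ (b * n.choose (k - j)) := by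
            apply mul_le_mul_left
            rw [add_comm (p' * x) (1 - p')]
            exact pow_le_pow_right₀ hy (card_Q_le j k J (hq J (List.mem_cons_self)) R)
        _ = ((1 - p') + p' * x) ^ ((b+1) * n.choose (k - j)) := by
            rw [← pow_add]
            congr 1
            ring


lemma measure_single (p' : ℝ≥0∞) (hp' : p' ≤ 1) (ω₀ : Finset (Fin n) → Bool) :
    hyperMeasure n p' hp' {ω₀} = ∏ e : Finset (Fin n), (cond (ω₀ e) p' (1 - p')) := by
  rw [hyperMeasure, ← Set.univ_pi_singleton ω₀, Measure.pi_pi]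
  exact Finset.prod_congr rfl (fun e _ => by
    rw [PMF.toMeasure_apply_singleton _ _ (measurableSet_singleton _), bernoulliPMF, PMF.ofFintype_apply])

lemma measure_eq_sum (p' : ℝ≥0∞) (hp' : p' ≤ 1) (A : Set (Finset (Fin n) → Bool))
    [DecidablePred (· ∈ A)] :
    hyperMeasure n p' hp' A
      = ∑ ω₀ ∈ Finset.univ.filter (· ∈ A),
          ∏ e : Finset (Fin n), (cond (ω₀ e) p' (1 - p')) := by
  classical
  have hA : A = ⋃ ω₀ ∈ Finset.univ.filter (· ∈ A), ({ω₀} : Set _) := by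
    ext ω
    simp
  conv_lhs => rw [hA]
  rw [measure_biUnion_finset]
  · exact Finset.sum_congr rfl (fun ω₀ _ => measure_single p' hp' ω₀)
  · intro a _ b _ hab
    simp [Set.disjoint_singleton, hab]
  · intro b _
    exact measurableSet_singleton _

lemma weight_eq (p' : ℝ≥0∞) (T : Finset (Finset (Fin n))) :
    ∏ e : Finset (Fin n), (cond (decide (e ∈ T)) p' (1 - p'))
      = p' ^ T.card * (1 - p') ^ (Fintype.card (Finset (Fin n)) - T.card) := by
  classical
  rw [← Finset.prod_mul_prod_compl T]
  have h1 : ∏ e ∈ T, (cond (decide (e ∈ T)) p' (1 - p')) = ∏ _e ∈ T, p' :=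
    Finset.prod_congr rfl (fun e he => by simp [he])
  have h2 : ∏ e ∈ Tᶜ, (cond (decide (e ∈ T)) p' (1 - p')) = ∏ _e ∈ Tᶜ, (1 - p') :=
    Finset.prod_congr rfl (fun e he => by
      simp only [Finset.mem_compl] at he
      simp [he])
  rw [h1, h2, Finset.prod_const, Finset.prod_const, Finset.card_compl]

lemma sum_fun_eq_sum_finset (G : (Finset (Fin n) → Bool) → ℝ≥0∞) :
    ∑ ω : Finset (Fin n) → Bool, G ω
      = ∑ T ∈ (Finset.univ : Finset (Finset (Fin n))).powerset, G (fun e => decide (e ∈ T)) := by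
  classical
  rw [Finset.powerset_univ]
  have hbij : Function.Bijective
      (fun (T : Finset (Finset (Fin n))) => (fun e => decide (e ∈ T) : Finset (Fin n) → Bool)) := by
    rw [Fintype.bijective_iff_injective_and_card]
    constructor
    · intro T T' h
      ext e
      have := congrFun h e
      simpa using this
    · rw [Fintype.card_fun, Fintype.card_finset, Fintype.card_bool]
  exact (Fintype.sum_bijective _ hbij
    (fun T => G (fun e => decide (e ∈ T))) G (fun T => rfl)).symm

lemma prob_le (hc : 1 ≤ k.choose j - 1) (p' : ℝ≥0∞) (hp' : p' ≤ 1)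
    (x : ℝ≥0∞) (hx : 1 ≤ x) (hxt : x ≠ ⊤)
    (m : ℕ) (hm : 1 ≤ m) (M : ℝ) (hMm : ∀ sc : ℕ, M < (sc : ℝ) → m ≤ sc) :
    hyperMeasure n p' hp'
      {ω | ∀ S : Finset (Finset (Fin n)), (∀ J ∈ S, J.card = j) →
        (∀ J₁ ∈ S, ∀ J₂ ∈ S, jConn (edgesOf ω k) j J₁ J₂) → (S.card : ℝ) ≤ M}ᶜ
    ≤ (n.choose j) * (((1 - p') + p' * x) ^ (m * n.choose (k - j)) /
        x ^ ((m + (k.choose j - 1) - 2) / (k.choose j - 1))) := by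
  classical
  set c := k.choose j - 1 with hcdef
  set s₀ := (m + c - 2) / c with hs₀
  set y := (1 - p') + p' * x with hy
  set N := n.choose (k - j) with hN
  -- Step A: the complement is covered by the per-root events
  have hsub : {ω : Finset (Fin n) → Bool | ∀ S : Finset (Finset (Fin n)),
        (∀ J ∈ S, J.card = j) →
        (∀ J₁ ∈ S, ∀ J₂ ∈ S, jConn (edgesOf ω k) j J₁ J₂) → (S.card : ℝ) ≤ M}ᶜ
      ⊆ ⋃ J₀ ∈ (Finset.univ : Finset (Fin n)).powersetCard j,
          {ω : Finset (Fin n) → Bool | m ≤ 1 + c * (explore j k ω m [J₀] Finset.univ).s} := by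
    intro ω hω
    simp only [Set.mem_compl_iff, Set.mem_setOf_eq, not_forall] at hω
    obtain ⟨S, hcards, hconn, hcard⟩ := hω
    have hmS : m ≤ S.card := hMm S.card (lt_of_not_ge hcard)
    obtain ⟨J₀, hJ₀, hineq⟩ := det j k ω m hm S hcards hconn hmS
    refine Set.mem_biUnion ?_ hineq
    exact Finset.mem_powersetCard.2 ⟨Finset.subset_univ _, hJ₀⟩
  refine le_trans (measure_mono hsub) ?_
  refine le_trans (measure_biUnion_finset_le _ _) ?_
  -- Step C: single root bound
  have hroot : ∀ J₀ ∈ (Finset.univ : Finset (Fin n)).powersetCard j,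
      hyperMeasure n p' hp'
        {ω : Finset (Fin n) → Bool | m ≤ 1 + c * (explore j k ω m [J₀] Finset.univ).s}
      ≤ y ^ (m * N) / x ^ s₀ := by
    intro J₀ hJ₀
    have hJ₀c : J₀.card = j := (Finset.mem_powersetCard.1 hJ₀).2
    have hx0 : x ≠ 0 := by
      intro h
      rw [h] at hx
      simp at hx
    rw [ENNReal.le_div_iff_mul_le (Or.inl (pow_ne_zero _ hx0)) (Or.inl (ENNReal.pow_ne_top hxt))]
    rw [measure_eq_sum]
    rw [Finset.sum_mul]
    have hstep1 : ∑ ω₀ ∈ Finset.univ.filter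
          (· ∈ {ω : Finset (Fin n) → Bool | m ≤ 1 + c * (explore j k ω m [J₀] Finset.univ).s}),
          (∏ e : Finset (Fin n), (cond (ω₀ e) p' (1 - p'))) * x ^ s₀
        ≤ ∑ ω₀ : Finset (Fin n) → Bool,
          (∏ e : Finset (Fin n), (cond (ω₀ e) p' (1 - p'))) *
            x ^ ((explore j k ω₀ m [J₀] Finset.univ).s) := by
      refine le_trans (Finset.sum_le_sum ?_) (Finset.sum_le_sum_of_subset (Finset.subset_univ _))
      intro ω₀ hω₀
      apply mul_le_mul_right
      apply pow_le_pow_right₀ hx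
      have hmem : m ≤ 1 + c * (explore j k ω₀ m [J₀] Finset.univ).s := by
        simpa using (Finset.mem_filter.1 hω₀).2
      rw [hs₀, Nat.div_le_iff_le_mul_add_pred (by omega)]
      omega
    refine le_trans hstep1 ?_
    rw [sum_fun_eq_sum_finset]
    have hstep2 : ∀ T ∈ (Finset.univ : Finset (Finset (Fin n))).powerset,
        (∏ e : Finset (Fin n), (cond (decide (e ∈ T)) p' (1 - p'))) *
          x ^ ((explore j k (fun e => decide (e ∈ T)) m [J₀] Finset.univ).s)
        = p' ^ T.card * (1 - p') ^ ((Finset.univ : Finset (Finset (Fin n))).card - T.card) *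
          x ^ ((explore j k (fun e => decide (e ∈ T)) m [J₀] Finset.univ).s) := by
      intro T _
      rw [weight_eq, Finset.card_univ]
    rw [Finset.sum_congr rfl hstep2]
    apply mgf_le j k p' x hp' hx m [J₀] Finset.univ
    intro J hJ
    rw [List.mem_singleton.1 hJ]
    exact hJ₀c
  refine le_trans (Finset.sum_le_sum hroot) ?_
  rw [Finset.sum_const, Finset.card_powersetCard, Finset.card_univ, Fintype.card_fin,
    nsmul_eq_mul]


lemma log_one_sub_le {e : ℝ} (h0 : 0 < e) (h13 : e ≤ 1/13) :
    Real.log (1 - e) ≤ -(e + (5/12) * e^2) := by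
  have habs : |e| < 1 := by rw [abs_of_pos h0]; linarith
  have h := Real.abs_log_sub_add_sum_range_le habs 2
  have hsum : (∑ i ∈ Finset.range 2, e ^ (i + 1) / ((i:ℝ) + 1)) = e + e^2/2 := by
    rw [Finset.sum_range_succ, Finset.sum_range_succ, Finset.sum_range_zero]
    norm_num
  rw [hsum, abs_of_pos h0] at h
  have h2 : e + e^2/2 + Real.log (1 - e) ≤ e^3/(1 - e) := le_trans (le_abs_self _) h
  have h3 : e^3/(1 - e) ≤ (1/12) * e^2 := by
    rw [div_le_iff₀ (by linarith : (0:ℝ) < 1 - e)]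
    nlinarith [sq_nonneg e, h0.le]
  linarith

set_option maxHeartbeats 2000000 in
lemma final_bound (j k n : ℕ) (hj : 1 ≤ j) (hjk : j < k) (en : ℝ) (he0 : 0 < en)
    (he13 : en ≤ 1/13) (hn3 : 3 ≤ n) (hnk : k ≤ n) (pn : ℝ≥0∞) (hpn1 : pn ≤ 1)
    (hpn : pn = ENNReal.ofReal
      ((1 - en) * (1 / (((k.choose j : ℝ) - 1) * (n.choose (k - j) : ℝ))))) :
    hyperMeasure n pn hpn1
      {ω | ∀ S : Finset (Finset (Fin n)), (∀ J ∈ S, J.card = j) →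
        (∀ J₁ ∈ S, ∀ J₂ ∈ S, jConn (edgesOf ω k) j J₁ J₂) →
        (S.card : ℝ) ≤ 3 * ((k.choose j : ℝ) - 1) * k * Real.log n / en ^ 2}ᶜ
    ≤ ENNReal.ofReal (Real.exp (2 - Real.log n)) := by
  classical
  -- basic numeric facts
  have hch2 : 2 ≤ k.choose j := by
    have h1 : (j+1).choose j ≤ k.choose j := Nat.choose_le_choose j hjk
    rw [Nat.choose_succ_self_right] at h1
    omega
  set c := k.choose j - 1 with hcdef
  have hc1 : 1 ≤ c := by omega
  have hccast : (k.choose j : ℝ) - 1 = (c : ℝ) := by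
    have : k.choose j = c + 1 := by omega
    rw [this]; push_cast; ring
  have hcR : (1:ℝ) ≤ (c:ℝ) := by exact_mod_cast hc1
  set N := n.choose (k - j) with hNdef
  have hN1 : 1 ≤ N := Nat.choose_pos (by omega)
  have hNR : (1:ℝ) ≤ (N:ℝ) := by exact_mod_cast hN1
  have h1e : 0 < 1 - en := by linarith
  have hnpos : (0:ℝ) < n := by
    have : (3:ℝ) ≤ n := by exact_mod_cast hn3
    linarith
  have hlog1 : 1 ≤ Real.log n := by
    rw [Real.le_log_iff_exp_le hnpos]
    calc Real.exp 1 ≤ 2.7182818286 := Real.exp_one_lt_d9.le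
      _ ≤ 3 := by norm_num
      _ ≤ n := by exact_mod_cast hn3
  set M : ℝ := 3 * ((k.choose j : ℝ) - 1) * k * Real.log n / en ^ 2 with hMdef
  have hkR : (1:ℝ) ≤ (k:ℝ) := by
    have : 1 ≤ k := by omega
    exact_mod_cast this
  have hM0 : 0 < M := by
    rw [hMdef, hccast]
    have hlogpos : (0:ℝ) < Real.log n := by linarith
    have h1 : (0:ℝ) < 3 * (c:ℝ) * k * Real.log n :=
      mul_pos (mul_pos (mul_pos (by norm_num) (by linarith)) (by linarith)) hlogpos
    positivity
  set m := ⌈M⌉₊ with hmdef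
  have hm1 : 1 ≤ m := Nat.ceil_pos.2 hM0
  have hmM : M ≤ (m:ℝ) := Nat.le_ceil M
  set x := ENNReal.ofReal (1/(1 - en)) with hxdef
  have hxR1 : (1:ℝ) ≤ 1/(1 - en) := by
    rw [le_div_iff₀ h1e]; linarith
  have hx : 1 ≤ x := ENNReal.one_le_ofReal.2 hxR1
  have hxt : x ≠ ⊤ := ENNReal.ofReal_ne_top
  have hm1R : (1:ℝ) ≤ (m:ℝ) := by exact_mod_cast hm1
  -- lower bound for the exponent (m + c - 2) / c
  have hs₀R : ((m:ℝ) - 1) / (c:ℝ) ≤ (((m + c - 2) / c : ℕ) : ℝ) := by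
    have hc0R : (0:ℝ) < (c:ℝ) := by linarith
    rw [div_le_iff₀ hc0R]
    have hdm := Nat.div_add_mod (m + c - 2) c
    have hmlt : (m + c - 2) % c < c := Nat.mod_lt _ (by omega)
    have h0 : ((m + c - 2 : ℕ):ℝ) = (m:ℝ) + (c:ℝ) - 2 := by
      rw [Nat.cast_sub (show 2 ≤ m + c by omega)]
      push_cast
      ring
    have hdmR : (c:ℝ) * (((m + c - 2)/c : ℕ):ℝ) + (((m + c - 2) % c : ℕ):ℝ)
        = (m:ℝ) + (c:ℝ) - 2 := by
      calc (c:ℝ) * (((m + c - 2)/c : ℕ):ℝ) + (((m + c - 2) % c : ℕ):ℝ)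
          = ((c * ((m + c - 2)/c) + (m + c - 2) % c : ℕ) : ℝ) := by push_cast; ring
        _ = ((m + c - 2 : ℕ):ℝ) := by rw [hdm]
        _ = (m:ℝ) + (c:ℝ) - 2 := h0
    have hmltR : (((m + c - 2) % c : ℕ):ℝ) ≤ (c:ℝ) - 1 := by
      have h2 : (m + c - 2) % c + 1 ≤ c := hmlt
      have h3 := (Nat.cast_le (α := ℝ)).2 h2
      push_cast at h3
      linarith
    linarith [hdmR, hmltR]
  -- apply the main probability bound
  have hmain := prob_le (n := n) j k (show 1 ≤ k.choose j - 1 by omega) pn hpn1 x hx hxt m hm1 M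
      (fun sc hsc => Nat.ceil_le.2 hsc.le)
  set s₀ := (m + c - 2) / c with hs₀def
  refine le_trans hmain ?_
  -- convert everything to `ofReal`
  have hcN0 : (0:ℝ) < (c:ℝ) * (N:ℝ) := by nlinarith
  have hq0 : 0 ≤ (1 - en) * (1 / (((k.choose j : ℝ) - 1) * (N : ℝ))) := by
    rw [hccast]
    positivity
  have hq1 : (1 - en) * (1 / (((k.choose j : ℝ) - 1) * (N : ℝ))) ≤ 1 := by
    rw [hccast, mul_one_div]
    rw [div_le_one hcN0]
    nlinarith
  have hpx : pn * x = ENNReal.ofReal (1 / ((c:ℝ) * N)) := by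
    rw [hpn, hxdef, ← ENNReal.ofReal_mul hq0]
    congr 1
    rw [hccast]
    field_simp
  have h1p : 1 - pn = ENNReal.ofReal (1 - (1 - en) * (1 / (((k.choose j : ℝ) - 1) * (N : ℝ)))) := by
    rw [hpn, ← ENNReal.ofReal_one, ← ENNReal.ofReal_sub _ hq0]
  have hy : (1 - pn) + pn * x = ENNReal.ofReal (1 + en / ((c:ℝ) * N)) := by
    rw [h1p, hpx, ← ENNReal.ofReal_add (by linarith) (by positivity)]
    congr 1
    rw [hccast]
    field_simp
    ring
  have hyb : ((1 - pn) + pn * x) ^ (m * N) = ENNReal.ofReal ((1 + en / ((c:ℝ)*N)) ^ (m * N)) := by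
    rw [hy, ← ENNReal.ofReal_pow (by positivity)]
  have hxb : x ^ s₀ = ENNReal.ofReal ((1/(1 - en)) ^ s₀) := by
    rw [hxdef, ← ENNReal.ofReal_pow (by positivity)]
  rw [hyb, hxb, ← ENNReal.ofReal_div_of_pos (by positivity),
    show ((n.choose j : ℝ≥0∞)) = ENNReal.ofReal ((n.choose j : ℝ)) by
      rw [ENNReal.ofReal_natCast],
    ← ENNReal.ofReal_mul (by positivity)]
  apply ENNReal.ofReal_le_ofReal
  -- now a purely real estimate
  have hdiv : (1 + en/((c:ℝ)*N)) ^ (m*N) / (1/(1 - en)) ^ s₀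
      = (1 + en/((c:ℝ)*N)) ^ (m*N) * (1 - en) ^ s₀ := by
    rw [one_div, inv_pow, div_eq_mul_inv, inv_inv]
  rw [hdiv]
  have b1 : (n.choose j : ℝ) ≤ Real.exp (j * Real.log n) := by
    calc (n.choose j : ℝ) ≤ (n:ℝ)^j := by exact_mod_cast Nat.choose_le_pow n j
      _ = Real.exp (j * Real.log n) := by
          conv_lhs => rw [← Real.exp_log hnpos]
          exact (Real.exp_nat_mul _ j).symm
  have b2 : (1 + en/((c:ℝ)*N)) ^ (m*N) ≤ Real.exp ((m:ℝ) * en / c) := by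
    have h1 : (1 + en/((c:ℝ)*N)) ≤ Real.exp (en/((c:ℝ)*N)) := by
      have := Real.add_one_le_exp (en/((c:ℝ)*N))
      linarith
    calc (1 + en/((c:ℝ)*N)) ^ (m*N) ≤ (Real.exp (en/((c:ℝ)*N))) ^ (m*N) :=
        pow_le_pow_left₀ (by positivity) h1 _
      _ = Real.exp (((m*N : ℕ):ℝ) * (en/((c:ℝ)*N))) := (Real.exp_nat_mul _ _).symm
      _ = Real.exp ((m:ℝ) * en / c) := by
          congr 1
          push_cast
          field_simp
  have b3 : (1 - en) ^ s₀ = Real.exp ((s₀:ℝ) * Real.log (1 - en)) := by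
    calc (1 - en) ^ s₀ = (Real.exp (Real.log (1 - en))) ^ s₀ := by rw [Real.exp_log h1e]
      _ = Real.exp ((s₀:ℝ) * Real.log (1 - en)) := (Real.exp_nat_mul _ _).symm
  calc (n.choose j : ℝ) * ((1 + en/((c:ℝ)*N)) ^ (m*N) * (1 - en) ^ s₀)
      ≤ Real.exp (j * Real.log n) *
          (Real.exp ((m:ℝ) * en / c) * Real.exp ((s₀:ℝ) * Real.log (1 - en))) := by
        rw [b3]
        apply mul_le_mul b1 (mul_le_mul_of_nonneg_right b2 (Real.exp_nonneg _))
          (by positivity) (Real.exp_nonneg _)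
    _ = Real.exp ((j:ℝ) * Real.log n + (m:ℝ) * en / c + (s₀:ℝ) * Real.log (1 - en)) := by
        rw [← Real.exp_add, ← Real.exp_add, add_assoc]
    _ ≤ Real.exp (2 - Real.log n) := by
        apply Real.exp_le_exp.2
        -- the exponent estimate
        have hlogneg : Real.log (1 - en) ≤ 0 := Real.log_nonpos (by linarith) (by linarith)
        have hs3 : (s₀:ℝ) * Real.log (1 - en) ≤ (((m:ℝ)-1)/(c:ℝ)) * Real.log (1 - en) :=
          mul_le_mul_of_nonpos_right hs₀R hlogneg
        have hlog2 := log_one_sub_le he0 he13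
        have hs4 : (((m:ℝ)-1)/(c:ℝ)) * Real.log (1 - en)
            ≤ (((m:ℝ)-1)/(c:ℝ)) * (-(en + (5/12) * en^2)) :=
          mul_le_mul_of_nonneg_left hlog2 (div_nonneg (by linarith) (by linarith))
        have hen2 : en ≠ 0 := ne_of_gt he0
        have hcne : (c:ℝ) ≠ 0 := by linarith
        have hMeq : (5/12) * en^2 * M / (c:ℝ) = (5/4) * k * Real.log n := by
          rw [hMdef, hccast]
          field_simp [hen2, hcne]
          ring
        have hM'' : (5/4) * (k:ℝ) * Real.log n ≤ (5/12) * en^2 * (m:ℝ) / (c:ℝ) := by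
          rw [← hMeq]
          gcongr
        have hA1 : en/(c:ℝ) ≤ 1 := by
          rw [div_le_one (by linarith)]
          linarith
        have hB1 : (5/12) * en^2/(c:ℝ) ≤ 1 := by
          rw [div_le_one (by linarith)]
          nlinarith
        have hcoef : (0:ℝ) ≤ ((5/4) * (k:ℝ) - j - 1) * Real.log n := by
          apply mul_nonneg _ (by linarith)
          have hjkR : (j:ℝ) + 1 ≤ (k:ℝ) := by exact_mod_cast hjk
          linarith
        have hstep : (m:ℝ) * en / (c:ℝ) + (((m:ℝ)-1)/(c:ℝ)) * (-(en + (5/12) * en^2))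
            = en/(c:ℝ) + (5/12) * en^2/(c:ℝ) - (5/12) * en^2 * (m:ℝ)/(c:ℝ) := by
          field_simp
          ring
        linarith [hs3, hs4]

end Stmt10

/-- Subcritical phase: with `c = C(k,j)-1`, `p₀ = 1/(c·C(n,k-j))` and `p = (1-ε)p₀`
where `ε → 0` and `ε³nʲ → ∞`, whp every `j`-component of `H^k(n,p)` (i.e. every family
of `j`-sets that is pairwise `j`-connected) contains at most `3ck·ε⁻²·log n` `j`-sets. -/
theorem stmt10 (j k : ℕ) (hj : 1 ≤ j) (hjk : j < k)
    (ε : ℕ → ℝ) (hεpos : ∀ n, 0 < ε n) (hε0 : Tendsto ε atTop (nhds 0))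
    (hε3 : Tendsto (fun n => (ε n) ^ 3 * (n : ℝ) ^ j) atTop atTop)
    (p : ℕ → ℝ≥0∞) (hp1 : ∀ n, p n ≤ 1)
    (hp : ∀ n, p n = ENNReal.ofReal
      ((1 - ε n) * (1 / (((k.choose j : ℝ) - 1) * (n.choose (k - j) : ℝ))))) :
    Tendsto (fun n =>
      hyperMeasure n (p n) (hp1 n)
        {ω | ∀ S : Finset (Finset (Fin n)),
          (∀ J ∈ S, J.card = j) →
          (∀ J₁ ∈ S, ∀ J₂ ∈ S, jConn (edgesOf ω k) j J₁ J₂) →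
          (S.card : ℝ) ≤ 3 * ((k.choose j : ℝ) - 1) * k * Real.log n / (ε n) ^ 2})
      atTop (nhds (1 : ℝ≥0∞)) := by
  have h13 : ∀ᶠ n in atTop, ε n < 1/13 := hε0.eventually_lt_const (by norm_num)
  have hb : ∀ᶠ n in atTop,
      hyperMeasure n (p n) (hp1 n)
        {ω | ∀ S : Finset (Finset (Fin n)),
          (∀ J ∈ S, J.card = j) →
          (∀ J₁ ∈ S, ∀ J₂ ∈ S, jConn (edgesOf ω k) j J₁ J₂) →
          (S.card : ℝ) ≤ 3 * ((k.choose j : ℝ) - 1) * k * Real.log n / (ε n) ^ 2}ᶜ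
      ≤ ENNReal.ofReal (Real.exp (2 - Real.log n)) := by
    filter_upwards [h13, eventually_ge_atTop 3, eventually_ge_atTop k] with n h13n h3n hkn
    exact Stmt10.final_bound j k n hj hjk (ε n) (hεpos n) h13n.le h3n hkn (p n) (hp1 n) (hp n)
  have h0 : Tendsto (fun n : ℕ => ENNReal.ofReal (Real.exp (2 - Real.log n))) atTop (nhds 0) := by
    have h1 : Tendsto (fun n : ℕ => Real.exp 2 * (1/(n:ℝ))) atTop (nhds (Real.exp 2 * 0)) :=
      tendsto_const_nhds.mul tendsto_one_div_atTop_nhds_zero_nat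
    rw [mul_zero] at h1
    have h2 : ∀ᶠ (n:ℕ) in atTop, Real.exp 2 * (1/(n:ℝ)) = Real.exp (2 - Real.log n) := by
      filter_upwards [eventually_ge_atTop 1] with n hn
      have hnpos : (0:ℝ) < n := by exact_mod_cast Nat.lt_of_lt_of_le Nat.zero_lt_one hn
      rw [Real.exp_sub, Real.exp_log hnpos]
      ring
    have h3 := h1.congr' h2
    have h4 := ENNReal.tendsto_ofReal h3
    simpa using h4
  have hcompl : Tendsto (fun n =>
      hyperMeasure n (p n) (hp1 n)
        {ω | ∀ S : Finset (Finset (Fin n)),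
          (∀ J ∈ S, J.card = j) →
          (∀ J₁ ∈ S, ∀ J₂ ∈ S, jConn (edgesOf ω k) j J₁ J₂) →
          (S.card : ℝ) ≤ 3 * ((k.choose j : ℝ) - 1) * k * Real.log n / (ε n) ^ 2}ᶜ)
      atTop (nhds 0) := by
    apply tendsto_of_tendsto_of_tendsto_of_le_of_le' tendsto_const_nhds h0
    · exact Filter.Eventually.of_forall (fun n => zero_le)
    · exact hb
  have hμeq : ∀ n : ℕ, hyperMeasure n (p n) (hp1 n)
        {ω | ∀ S : Finset (Finset (Fin n)),
          (∀ J ∈ S, J.card = j) →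
          (∀ J₁ ∈ S, ∀ J₂ ∈ S, jConn (edgesOf ω k) j J₁ J₂) →
          (S.card : ℝ) ≤ 3 * ((k.choose j : ℝ) - 1) * k * Real.log n / (ε n) ^ 2}
      = 1 - hyperMeasure n (p n) (hp1 n)
        {ω | ∀ S : Finset (Finset (Fin n)),
          (∀ J ∈ S, J.card = j) →
          (∀ J₁ ∈ S, ∀ J₂ ∈ S, jConn (edgesOf ω k) j J₁ J₂) →
          (S.card : ℝ) ≤ 3 * ((k.choose j : ℝ) - 1) * k * Real.log n / (ε n) ^ 2}ᶜ := by
    intro n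
    haveI : IsProbabilityMeasure (hyperMeasure n (p n) (hp1 n)) := by
      unfold hyperMeasure
      infer_instance
    have hms : MeasurableSet ({ω | ∀ S : Finset (Finset (Fin n)),
          (∀ J ∈ S, J.card = j) →
          (∀ J₁ ∈ S, ∀ J₂ ∈ S, jConn (edgesOf ω k) j J₁ J₂) →
          (S.card : ℝ) ≤ 3 * ((k.choose j : ℝ) - 1) * k * Real.log n / (ε n) ^ 2}ᶜ
        : Set (Finset (Fin n) → Bool)) := (Set.to_countable _).measurableSet
    have h5 := prob_compl_eq_one_sub (μ := hyperMeasure n (p n) (hp1 n)) hms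
    rwa [compl_compl] at h5
  have hfinal := ENNReal.Tendsto.sub (tendsto_const_nhds (x := (1:ℝ≥0∞))) hcompl
    (Or.inl ENNReal.one_ne_top)
  rw [tsub_zero] at hfinal
  exact Tendsto.congr (fun n => (hμeq n).symm) hfinal
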